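/- Let ξ, ξ′ ∈ ℝ³ be unit vectors, let A, A′ ∈ ℝ³ be unit vectors with A·ξ = 0 and A′·ξ′ = 0, let B := (A + i ξ×A)/√2 and B′ := (A′ + i ξ′×A′)/√2 be the associated Beltrami vectors, let λ ∈ ℝ, and define W(x) := B e^{iλ ξ·x} and W′(x) := B′ e^{iλ ξ′·x}. Then for every i ∈ {1,2,3} and x ∈ ℝ³, Σ_{j=1}^{3} ∂_j ( W_i W′_j + W′_i W_j )(x) = ∂_i ( Σ_{k=1}^{3} W_k W′_k )(x); that is, div( W ⊗ W′ + W′ ⊗ W ) = ∇( W · W′ ), where the dot product on ℂ³ is bilinear (without conjugation). -/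

import Mathlib

open Matrix

/-- The Beltrami vector `B = (A + i ξ×A)/√2 ∈ ℂ³` associated with unit vectors
`ξ, A ∈ ℝ³` with `A·ξ = 0`. The cross product is extended ℂ-bilinearly to `ℂ³`. -/
noncomputable def beltrami (ξ A : Fin 3 → ℝ) : Fin 3 → ℂ :=
  fun k =>
    ((A k : ℂ) + Complex.I * crossProduct (fun j => (ξ j : ℂ)) (fun j => (A j : ℂ)) k) /
      (Real.sqrt 2 : ℂ)

/-- The partial derivative `∂_j f` of a complex-valued function on `ℝ³`. -/
noncomputable def pdC (j : Fin 3) (f : (Fin 3 → ℝ) → ℂ) (x : Fin 3 → ℝ) : ℂ :=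
  fderiv ℝ f x (Pi.single j 1)

lemma bac_cab (u v w : Fin 3 → ℂ) :
    u ⨯₃ (v ⨯₃ w) = (u ⬝ᵥ w) • v - (u ⬝ᵥ v) • w := by
  ext i
  fin_cases i <;>
    · simp [cross_apply, dotProduct, Fin.sum_univ_three]
      ring

lemma key_vec (u u' a a' : Fin 3 → ℂ)
    (huu : u ⬝ᵥ u = 1) (hua : u ⬝ᵥ a = 0)
    (huu' : u' ⬝ᵥ u' = 1) (hua' : u' ⬝ᵥ a' = 0) :
    ((a + Complex.I • (u ⨯₃ a)) ⬝ᵥ u') • (a' + Complex.I • (u' ⨯₃ a'))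
      + ((a' + Complex.I • (u' ⨯₃ a')) ⬝ᵥ u) • (a + Complex.I • (u ⨯₃ a))
      = ((a + Complex.I • (u ⨯₃ a)) ⬝ᵥ (a' + Complex.I • (u' ⨯₃ a'))) • (u + u') := by
  set b := a + Complex.I • (u ⨯₃ a) with hb
  set b' := a' + Complex.I • (u' ⨯₃ a') with hb'
  have hII : (-Complex.I) * Complex.I = 1 := by
    simp [Complex.I_mul_I]
  have hcb : u ⨯₃ b = -Complex.I • b := by
    rw [hb, map_add, LinearMap.map_smul, bac_cab, hua, huu]
    rw [smul_add, smul_smul, hII]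
    module
  have hcb' : u' ⨯₃ b' = -Complex.I • b' := by
    rw [hb', map_add, LinearMap.map_smul, bac_cab, hua', huu']
    rw [smul_add, smul_smul, hII]
    module
  have e1 : b ⨯₃ (u' ⨯₃ b') = (b ⬝ᵥ b') • u' - (b ⬝ᵥ u') • b' := bac_cab _ _ _
  have e2 : b' ⨯₃ (u ⨯₃ b) = (b' ⬝ᵥ b) • u - (b' ⬝ᵥ u) • b := bac_cab _ _ _
  rw [hcb'] at e1
  rw [hcb] at e2
  rw [LinearMap.map_smul] at e1 e2
  have hanti : b' ⨯₃ b = -(b ⨯₃ b') := by rw [← cross_anticomm]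
  rw [hanti] at e2
  have hcomm : b' ⬝ᵥ b = b ⬝ᵥ b' := dotProduct_comm _ _
  rw [hcomm] at e2
  linear_combination (norm := module) e1 + e2

lemma pdC_mul_exp (ν : Fin 3 → ℂ) (c : ℂ) (j : Fin 3) (x : Fin 3 → ℝ) :
    pdC j (fun y => c * Complex.exp (∑ k, ν k * (y k : ℂ))) x
      = c * ν j * Complex.exp (∑ k, ν k * (x k : ℂ)) := by
  set L : (Fin 3 → ℝ) →L[ℝ] ℂ :=
    ∑ k, ν k • (Complex.ofRealCLM.comp
      (ContinuousLinearMap.proj (R := ℝ) (φ := fun _ : Fin 3 => ℝ) k)) with hLdef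
  have hL : ∀ y : Fin 3 → ℝ, L y = ∑ k, ν k * (y k : ℂ) := by
    intro y
    simp [hLdef, ContinuousLinearMap.sum_apply]
  have hfun : (fun y : Fin 3 → ℝ => c * Complex.exp (∑ k, ν k * (y k : ℂ)))
      = fun y => c * Complex.exp (L y) := by
    funext y; rw [hL]
  have hd : HasFDerivAt (fun y => c * Complex.exp (L y))
      (c • (Complex.exp (L x) • L)) x := (L.hasFDerivAt.cexp).const_mul c
  rw [pdC, hfun, hd.fderiv]
  have hsingle : L (Pi.single j 1) = ν j := by
    fin_cases j <;>
      simp [hLdef, ContinuousLinearMap.sum_apply, Pi.single_apply, Fin.sum_univ_three]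
  simp [hsingle, hL x]
  ring

/-- For two Beltrami waves `W, W'` with the same frequency `λ` one has
`div(W ⊗ W' + W' ⊗ W) = ∇(W · W')`, the dot product being bilinear (no conjugation). -/
theorem stmt_7 (ξ ξ' A A' : Fin 3 → ℝ) (lam : ℝ)
    (hξ : ∑ k, ξ k ^ 2 = 1) (hξ' : ∑ k, ξ' k ^ 2 = 1)
    (hA : ∑ k, A k ^ 2 = 1) (hA' : ∑ k, A' k ^ 2 = 1)
    (hAξ : ∑ k, A k * ξ k = 0) (hAξ' : ∑ k, A' k * ξ' k = 0)
    (W W' : (Fin 3 → ℝ) → Fin 3 → ℂ)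
    (hW : ∀ x k, W x k =
      beltrami ξ A k * Complex.exp (Complex.I * (lam : ℂ) * ∑ j, (ξ j : ℂ) * (x j : ℂ)))
    (hW' : ∀ x k, W' x k =
      beltrami ξ' A' k * Complex.exp (Complex.I * (lam : ℂ) * ∑ j, (ξ' j : ℂ) * (x j : ℂ))) :
    ∀ (i : Fin 3) (x : Fin 3 → ℝ),
      ∑ j, pdC j (fun y => W y i * W' y j + W' y i * W y j) x =
        pdC i (fun y => ∑ k, W y k * W' y k) x := by
  intro i x
  set u : Fin 3 → ℂ := fun j => (ξ j : ℂ) with hu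
  set u' : Fin 3 → ℂ := fun j => (ξ' j : ℂ) with hu'
  set a : Fin 3 → ℂ := fun j => (A j : ℂ) with ha
  set a' : Fin 3 → ℂ := fun j => (A' j : ℂ) with ha'
  have hξ3 := hξ; rw [Fin.sum_univ_three] at hξ3
  have hξ3' := hξ'; rw [Fin.sum_univ_three] at hξ3'
  have hAξ3 := hAξ; rw [Fin.sum_univ_three] at hAξ3
  have hAξ3' := hAξ'; rw [Fin.sum_univ_three] at hAξ3'
  have huu : u ⬝ᵥ u = 1 := by
    simp only [hu, dotProduct, Fin.sum_univ_three]
    norm_cast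
    linear_combination hξ3
  have huu' : u' ⬝ᵥ u' = 1 := by
    simp only [hu', dotProduct, Fin.sum_univ_three]
    norm_cast
    linear_combination hξ3'
  have hua : u ⬝ᵥ a = 0 := by
    simp only [hu, ha, dotProduct, Fin.sum_univ_three]
    norm_cast
    linear_combination hAξ3
  have hua' : u' ⬝ᵥ a' = 0 := by
    simp only [hu', ha', dotProduct, Fin.sum_univ_three]
    norm_cast
    linear_combination hAξ3'
  have KV := key_vec u u' a a' (by rw [huu]) hua huu' hua'
  have hdub : u ⬝ᵥ (a + Complex.I • (u ⨯₃ a)) = 0 := by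
    rw [dotProduct_add, dotProduct_smul, hua, dot_self_cross]
    simp
  have hdu'b' : u' ⬝ᵥ (a' + Complex.I • (u' ⨯₃ a')) = 0 := by
    rw [dotProduct_add, dotProduct_smul, hua', dot_self_cross]
    simp
  have KVi := congrFun KV i
  simp only [Pi.add_apply, Pi.smul_apply, smul_eq_mul, dotProduct, Fin.sum_univ_three]
    at KVi hdub hdu'b'
  have hb : ∀ k, beltrami ξ A k = ((a + Complex.I • (u ⨯₃ a)) k) / (Real.sqrt 2 : ℂ) :=
    fun k => rfl
  have hb' : ∀ k, beltrami ξ' A' k = ((a' + Complex.I • (u' ⨯₃ a')) k) / (Real.sqrt 2 : ℂ) :=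
    fun k => rfl
  have hkey : ∑ j, (beltrami ξ A i * beltrami ξ' A' j + beltrami ξ' A' i * beltrami ξ A j)
        * (u j + u' j)
      = (∑ k, beltrami ξ A k * beltrami ξ' A' k) * (u i + u' i) := by
    simp only [Fin.sum_univ_three, hb, hb', Pi.add_apply, Pi.smul_apply, smul_eq_mul]
    linear_combination (1 / ((Real.sqrt 2 : ℂ) * (Real.sqrt 2 : ℂ)))
      * (KVi + (a i + Complex.I * (u ⨯₃ a) i) * hdu'b'
          + (a' i + Complex.I * (u' ⨯₃ a') i) * hdub)
  set ν : Fin 3 → ℂ := fun k => Complex.I * (lam : ℂ) * (u k + u' k) with hν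
  have hEE : ∀ y : Fin 3 → ℝ,
      Complex.exp (Complex.I * (lam : ℂ) * ∑ j, (ξ j : ℂ) * (y j : ℂ))
        * Complex.exp (Complex.I * (lam : ℂ) * ∑ j, (ξ' j : ℂ) * (y j : ℂ))
      = Complex.exp (∑ k, ν k * (y k : ℂ)) := by
    intro y
    rw [← Complex.exp_add]
    congr 1
    simp only [hν, hu, hu', Fin.sum_univ_three]
    ring
  have hterm : ∀ j, (fun y => W y i * W' y j + W' y i * W y j)
      = fun y => (beltrami ξ A i * beltrami ξ' A' j + beltrami ξ' A' i * beltrami ξ A j)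
          * Complex.exp (∑ k, ν k * (y k : ℂ)) := by
    intro j
    funext y
    rw [hW, hW', hW, hW', ← hEE y]
    ring
  have hsum : (fun y => ∑ k, W y k * W' y k)
      = fun y => (∑ k, beltrami ξ A k * beltrami ξ' A' k)
          * Complex.exp (∑ m, ν m * (y m : ℂ)) := by
    funext y
    rw [Finset.sum_mul]
    exact Finset.sum_congr rfl fun k _ => by rw [hW, hW', ← hEE y]; ring
  have hLHS : ∑ j, pdC j (fun y => W y i * W' y j + W' y i * W y j) x
      = ∑ j, (beltrami ξ A i * beltrami ξ' A' j + beltrami ξ' A' i * beltrami ξ A j)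
          * ν j * Complex.exp (∑ k, ν k * (x k : ℂ)) :=
    Finset.sum_congr rfl fun j _ => by rw [hterm j, pdC_mul_exp]
  rw [hLHS, hsum, pdC_mul_exp]
  generalize Complex.exp (∑ k, ν k * (x k : ℂ)) = E
  simp only [hν, Fin.sum_univ_three] at hkey ⊢
  linear_combination (Complex.I * (lam : ℂ) * E) * hkey
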